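/- For λ, μ ∈ ℂ*, α, β ∈ ℂ, t, t′ ∈ {±1}: M_t(λ, α) ≅ M_{t′}(μ, β) as 𝒯-modules if and only if λ = μ, α = β and t = t′. Moreover, Π(M_t(λ, α)) is not isomorphic to M_{t′}(μ′, β′) for any μ′ ∈ ℂ*, β′ ∈ ℂ. -/

import Mathlib

open Polynomial

/- `M_t(λ, α) = ℂ[∂²] ⊕ ∂ℂ[∂²]` is encoded as pairs of polynomials.  A fixed global
square-root function `sq` (with `(sq z)² = z`) provides the consistent choice of
`λ^p := (sq λ)^{2p}`; half-integer indices are encoded by their doubles `a = 2p`. -/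

noncomputable def MLop (nu α : ℂ) (m : ℤ) (v : Polynomial ℂ × Polynomial ℂ) :
    Polynomial ℂ × Polynomial ℂ :=
  (nu ^ (2 * m) • ((X + C ((m : ℂ) * α)) * v.1.comp (X + C (m : ℂ))),
   nu ^ (2 * m) • ((X + C ((m : ℂ) * (α + 1/2))) * v.2.comp (X + C (m : ℂ))))

noncomputable def MIop (t nu α : ℂ) (a : ℤ) (v : Polynomial ℂ × Polynomial ℂ) :
    Polynomial ℂ × Polynomial ℂ :=
  ((-2 * t ^ a * nu ^ a * α) • v.1.comp (X + C ((a : ℂ) / 2)),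
   (t ^ a * nu ^ a * (1 - 2 * α)) • v.2.comp (X + C ((a : ℂ) / 2)))

noncomputable def MGop (t nu α : ℂ) (a : ℤ) (v : Polynomial ℂ × Polynomial ℂ) :
    Polynomial ℂ × Polynomial ℂ :=
  (((-t) ^ a * nu ^ a) • ((X + C ((a : ℂ) * α)) * v.2.comp (X + C ((a : ℂ) / 2))),
   (t ^ a * nu ^ a) • v.1.comp (X + C ((a : ℂ) / 2)))

/- `Π(M_t(λ,α))` is encoded as pairs `(a,b)` with even part the odd part of `M`;
the action of an operator on `(a,b)` is the swap of its `M`-action on `(b,a)`. -/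
noncomputable def PiLop (nu α : ℂ) (m : ℤ) (v : Polynomial ℂ × Polynomial ℂ) :
    Polynomial ℂ × Polynomial ℂ :=
  ((MLop nu α m (v.2, v.1)).2, (MLop nu α m (v.2, v.1)).1)

noncomputable def PiIop (t nu α : ℂ) (a : ℤ) (v : Polynomial ℂ × Polynomial ℂ) :
    Polynomial ℂ × Polynomial ℂ :=
  ((MIop t nu α a (v.2, v.1)).2, (MIop t nu α a (v.2, v.1)).1)

noncomputable def PiGop (t nu α : ℂ) (a : ℤ) (v : Polynomial ℂ × Polynomial ℂ) :
    Polynomial ℂ × Polynomial ℂ :=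
  ((MGop t nu α a (v.2, v.1)).2, (MGop t nu α a (v.2, v.1)).1)

/-- `e` is an even (parity-preserving) linear bijection. -/
def GradedEquiv (e : (Polynomial ℂ × Polynomial ℂ) ≃ₗ[ℂ] (Polynomial ℂ × Polynomial ℂ)) :
    Prop :=
  ∀ f : Polynomial ℂ, (e (f, (0 : Polynomial ℂ))).2 = 0 ∧ (e ((0 : Polynomial ℂ), f)).1 = 0

private lemma graded_apply (e : (Polynomial ℂ × Polynomial ℂ) ≃ₗ[ℂ] (Polynomial ℂ × Polynomial ℂ))
    (hgr : GradedEquiv e) (f g : Polynomial ℂ) :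
    e (f, g) = ((e (f, 0)).1, (e (0, g)).2) := by
  have h : (f, g) = ((f, (0:Polynomial ℂ)) + ((0:Polynomial ℂ), g)) := by simp
  rw [h, map_add]
  refine Prod.ext ?_ ?_
  · simp [(hgr g).2]
  · simp [(hgr f).1]

private lemma commutes_mul (A : Polynomial ℂ → Polynomial ℂ)
    (hadd : ∀ p q, A (p + q) = A p + A q)
    (hsmul : ∀ (a : ℂ) p, A (a • p) = a • A p)
    (hX : ∀ p, A (X * p) = X * A p) (p : Polynomial ℂ) : A p = p * A 1 := by
  induction p using Polynomial.induction_on' with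
  | add p q hp hq => rw [hadd, hp, hq, add_mul]
  | monomial n a =>
    have hpow : ∀ n : ℕ, A (X ^ n) = X ^ n * A 1 := by
      intro n
      induction n with
      | zero => simp
      | succ k ih =>
          rw [pow_succ, mul_comm (X ^ k) X, hX, ih, ← mul_assoc, mul_comm X (X ^ k)]
    rw [← Polynomial.smul_X_eq_monomial, hsmul, hpow, smul_mul_assoc]

set_option maxHeartbeats 1600000 in
theorem stmt11 (sq : ℂ → ℂ) (hsq : ∀ z : ℂ, (sq z) ^ 2 = z)
    (lam mu : ℂ) (hlam : lam ≠ 0) (hmu : mu ≠ 0) (α β : ℂ)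
    (t t' : ℂ) (ht : t = 1 ∨ t = -1) (ht' : t' = 1 ∨ t' = -1) :
    ((∃ e : (Polynomial ℂ × Polynomial ℂ) ≃ₗ[ℂ] (Polynomial ℂ × Polynomial ℂ),
        GradedEquiv e ∧
        (∀ (m : ℤ) v, e (MLop (sq lam) α m v) = MLop (sq mu) β m (e v)) ∧
        (∀ a : ℤ, Odd a → ∀ v, e (MIop t (sq lam) α a v) = MIop t' (sq mu) β a (e v)) ∧
        (∀ (a : ℤ) v, e (MGop t (sq lam) α a v) = MGop t' (sq mu) β a (e v)))
      ↔ (lam = mu ∧ α = β ∧ t = t')) ∧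
    (∀ mu' β' : ℂ, mu' ≠ 0 →
      ¬ ∃ e : (Polynomial ℂ × Polynomial ℂ) ≃ₗ[ℂ] (Polynomial ℂ × Polynomial ℂ),
          GradedEquiv e ∧
          (∀ (m : ℤ) v, e (PiLop (sq lam) α m v) = MLop (sq mu') β' m (e v)) ∧
          (∀ a : ℤ, Odd a → ∀ v, e (PiIop t (sq lam) α a v) = MIop t' (sq mu') β' a (e v)) ∧
          (∀ (a : ℤ) v, e (PiGop t (sq lam) α a v) = MGop t' (sq mu') β' a (e v))) := by
  constructor
  · constructor
    · rintro ⟨e, hgr, hL, hI, hG⟩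
      set nu := sq lam with hnu_def
      set nu' := sq mu with hnu'_def
      have hnu : nu ≠ 0 := fun h => hlam (by rw [← hsq lam, ← hnu_def, h]; ring)
      set A : Polynomial ℂ → Polynomial ℂ := fun p => (e (p, 0)).1 with hA_def
      have hE : ∀ f g, e (f, g) = (A f, (e (0, g)).2) := fun f g => graded_apply e hgr f g
      have hadd : ∀ p q, A (p + q) = A p + A q := by
        intro p q
        have : ((p + q : Polynomial ℂ), (0 : Polynomial ℂ)) = (p, 0) + (q, 0) := by simp
        simp only [hA_def, this, map_add, Prod.fst_add]
      have hsmul : ∀ (a : ℂ) p, A (a • p) = a • A p := by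
        intro a p
        have : ((a • p : Polynomial ℂ), (0 : Polynomial ℂ)) = a • (p, (0:Polynomial ℂ)) := by
          simp
        simp only [hA_def, this, map_smul, Prod.smul_fst]
      -- the G_0 relation
      have hG0 := hG 0
      simp only [MGop, zpow_zero, one_mul, Int.cast_zero, zero_mul, map_zero, add_zero,
        zero_div, comp_X, one_smul, neg_zero] at hG0
      have hBA : ∀ f, (e (0, f)).2 = A f := by
        intro f
        have h := congrArg Prod.snd (hG0 (f, 0))
        simp only [mul_zero] at h
        simpa [hA_def, (hgr f).1] using h
      have hAX : ∀ f, A (X * f) = X * A f := by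
        intro f
        have h := congrArg Prod.fst (hG0 (0, f))
        simp only [hBA] at h
        simpa [hA_def] using h
      have hmul : ∀ p, A p = p * A 1 := commutes_mul A hadd hsmul hAX
      have hAfst : ∀ p : Polynomial ℂ, (e (p, 0)).1 = A p := fun p => rfl
      -- surjectivity gives that A 1 is a unit
      have hsurj : ∀ p : Polynomial ℂ, ∃ q, A q = p := by
        intro p
        refine ⟨(e.symm (p, 0)).1, ?_⟩
        have h : e ((e.symm (p, 0)).1, (e.symm (p, 0)).2) = (p, 0) := by
          rw [show ((e.symm (p, 0)).1, (e.symm (p, 0)).2) = e.symm (p, 0) from rfl]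
          exact e.apply_symm_apply _
        rw [hE] at h
        exact congrArg Prod.fst h
      obtain ⟨q, hq⟩ := hsurj 1
      rw [hmul] at hq
      have hu : IsUnit (A 1) := IsUnit.of_mul_eq_one (a := A 1) q (by rw [mul_comm]; exact hq)
      obtain ⟨c0, hc0u, hc0⟩ := Polynomial.isUnit_iff.mp hu
      have hc0ne : c0 ≠ 0 := hc0u.ne_zero
      have he10 : e (1, 0) = (C c0, 0) := by
        rw [hE, hc0]
        refine Prod.ext rfl ?_
        simp [(hgr 0).1]
      -- the L_1 relation on (1,0)
      have h2 : nu ^ 2 = lam := by rw [hnu_def]; exact hsq lam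
      have h2' : nu' ^ 2 = mu := by rw [hnu'_def]; exact hsq mu
      have hCc0 : (C c0 : Polynomial ℂ) ≠ 0 := by simpa using hc0ne
      have key1 : (lam • (X + C α)) * C c0 = (mu • (X + C β)) * C c0 := by
        have h := hL 1 (1, 0)
        simp only [MLop, Int.cast_one, one_mul, one_comp, zero_comp, mul_zero, smul_zero,
          he10, C_comp, mul_one] at h
        have h1 := congrArg Prod.fst h
        simp only [hAfst] at h1
        rw [hsmul, hmul, ← hc0] at h1
        rw [← h2, ← h2', smul_mul_assoc, smul_mul_assoc]
        exact h1
      have key1' : lam • (X + C α) = mu • (X + C β) := mul_right_cancel₀ hCc0 key1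
      have hlm : lam = mu := by
        have := congrArg (fun p => Polynomial.coeff p 1) key1'
        simpa [coeff_smul, coeff_C] using this
      have hab : α = β := by
        have := congrArg (fun p => Polynomial.coeff p 0) key1'
        simp only [coeff_smul, coeff_add, coeff_X_zero, coeff_C, if_pos rfl, zero_add,
          smul_eq_mul] at this
        rw [← hlm] at this
        exact mul_left_cancel₀ hlam this
      have hnn : nu' = nu := by rw [hnu'_def, hnu_def, hlm]
      -- the I_1 relations
      have hI1 := hI 1 odd_one
      have hE1 : -2 * t * nu * α * c0 = -2 * t' * nu * α * c0 := by
        have h := hI1 (1, 0)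
        simp only [MIop, zpow_one, one_comp, zero_comp, smul_zero, he10, C_comp,
          Int.cast_one, hnn, ← hab] at h
        have h1 := congrArg Prod.fst h
        simp only [hAfst] at h1
        rw [hsmul, hmul, ← hc0] at h1
        have : C (-2 * t * nu * α * c0) = C (-2 * t' * nu * α * c0) := by
          simpa [Polynomial.smul_C, one_mul, mul_one] using h1
        exact C_injective this
      have hE2 : t * nu * (1 - 2 * α) * c0 = t' * nu * (1 - 2 * α) * c0 := by
        have h := hI1 (0, 1)
        simp only [MIop, zpow_one, one_comp, zero_comp, smul_zero, Int.cast_one, hnn,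
          ← hab] at h
        have h1 := congrArg Prod.snd h
        simp only [hBA] at h1
        rw [hsmul, hmul, ← hc0] at h1
        have : C (t * nu * (1 - 2 * α) * c0) = C (t' * nu * (1 - 2 * α) * c0) := by
          simpa [Polynomial.smul_C, one_mul, mul_one] using h1
        exact C_injective this
      have h3 : nu * c0 * t = nu * c0 * t' := by linear_combination hE2 - hE1
      exact ⟨hlm, hab, mul_left_cancel₀ (mul_ne_zero hnu hc0ne) h3⟩
    · rintro ⟨rfl, rfl, rfl⟩
      exact ⟨LinearEquiv.refl ℂ _, fun f => ⟨rfl, rfl⟩, fun m v => rfl, fun a _ v => rfl,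
        fun a v => rfl⟩
  · rintro mu' β' hmu' ⟨e, hgr, hL, hI, hG⟩
    have hG0 := hG 0
    simp only [PiGop, MGop, zpow_zero, one_mul, Int.cast_zero, zero_mul, map_zero,
      add_zero, zero_div, comp_X, one_smul, neg_zero] at hG0
    have hA1 : ∀ g : Polynomial ℂ, (e (g, 0)).1 = X * (e (0, g)).2 := by
      intro g
      have h := congrArg Prod.fst (hG0 (0, g))
      simpa using h
    set w := e.symm (1, 0) with hw
    have h : e (w.1, w.2) = (1, 0) := by
      rw [show (w.1, w.2) = w from rfl, hw]; exact e.apply_symm_apply _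
    rw [graded_apply e hgr] at h
    have h1 : (e (w.1, 0)).1 = 1 := congrArg Prod.fst h
    rw [hA1] at h1
    have h0 := congrArg (fun p => Polynomial.coeff p 0) h1
    simp [Polynomial.mul_coeff_zero] at h0
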